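/- For each color j and each n_j ≥ 0, the generating function (by total sum) of weakly increasing sequences m_1 ≤ ... ≤ m_{n_j} of integers with m_1 ≥ c and m_{k+1} ≥ m_k + 2, where c = 1 + Σ_{i<j} n_i + δ_{j≤r}, equals q^{n_j² + (c-1)n_j}/(q)_{n_j}. Consequently the product over j = 1,...,ℓ of these generating functions equals q^{Σ_i n_i² + Σ_{i<j} n_i n_j + Σ_{i≤r} n_i} / ((q)_{n_1}···(q)_{n_ℓ}). -/

import Mathlib

open Finset PowerSeries

noncomputable def seqGF (c n : ℕ) : PowerSeries ℚ :=
  PowerSeries.mk fun d =>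
    (Nat.card {m : Fin n → ℕ //
      (∀ k : Fin n, (k : ℕ) = 0 → c ≤ m k) ∧
      (∀ k l : Fin n, (k : ℕ) + 1 = (l : ℕ) → m k + 2 ≤ m l) ∧
      ∑ k, m k = d} : ℚ)

def SeqSet (c n d : ℕ) : Type :=
  {m : Fin n → ℕ //
      (∀ k : Fin n, (k : ℕ) = 0 → c ≤ m k) ∧
      (∀ k l : Fin n, (k : ℕ) + 1 = (l : ℕ) → m k + 2 ≤ m l) ∧
      ∑ k, m k = d}

lemma seqSet_le (c n d : ℕ) (x : SeqSet c n d) (k : Fin n) : x.1 k ≤ d := by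
  have := x.2.2.2
  calc x.1 k ≤ ∑ i, x.1 i := Finset.single_le_sum (fun i _ => Nat.zero_le _) (Finset.mem_univ k)
    _ = d := this

instance (c n d : ℕ) : Finite (SeqSet c n d) := by
  apply Finite.of_injective (fun x : SeqSet c n d =>
    (fun k => (⟨x.1 k, Nat.lt_succ_of_le (seqSet_le c n d x k)⟩ : Fin (d+1))))
  intro x y h
  apply Subtype.ext
  funext k
  exact congrArg Fin.val (congrFun h k)

lemma coeff_seqGF (c n d : ℕ) :
    (coeff d) (seqGF c n) = (Nat.card (SeqSet c n d) : ℚ) := by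
  simp [seqGF, SeqSet, coeff_mk]

lemma seqGF_zero (c : ℕ) : seqGF c 0 = 1 := by
  ext d
  rw [coeff_seqGF]
  rcases Nat.eq_zero_or_pos d with rfl | hd
  · have : Nat.card (SeqSet c 0 0) = 1 := by
      rw [Nat.card_eq_one_iff_unique]
      constructor
      · constructor
        intro x y
        apply Subtype.ext; funext k; exact k.elim0
      · exact ⟨⟨fun k => k.elim0, fun k => k.elim0, fun k => k.elim0, by simp⟩⟩
    simp [this]
  · have : IsEmpty (SeqSet c 0 d) := by
      constructor
      rintro ⟨m, -, -, hs⟩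
      simp at hs
      omega
    rw [Nat.card_of_isEmpty]
    rw [coeff_one]
    simp [Nat.pos_iff_ne_zero.mp hd]

-- all entries positive if the first is
lemma seqSet_pos {c n d : ℕ} (x : SeqSet c (n+1) d) (h0 : 1 ≤ x.1 0) :
    ∀ k : Fin (n+1), 1 ≤ x.1 k := by
  intro k
  induction k using Fin.induction with
  | zero => exact h0
  | succ i ih =>
    have := x.2.2.1 i.castSucc i.succ (by simp)
    omega

-- equiv for the case m 0 = c
def equivA (c n d : ℕ) (hcd : c ≤ d) :
    {x : SeqSet c (n+1) d // x.1 0 = c} ≃ SeqSet (c+2) n (d - c) where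
  toFun x := ⟨Fin.tail x.1.1, by
    refine ⟨?_, ?_, ?_⟩
    · intro k hk
      have hg := x.1.2.2.1 0 k.succ (by simp [hk])
      have h0 : x.1.1 0 = c := x.2
      simpa [Fin.tail, h0] using hg
    · intro k l hkl
      exact x.1.2.2.1 k.succ l.succ (by simpa using by omega)
    · have hs := x.1.2.2.2
      rw [Fin.sum_univ_succ] at hs
      have h0 : x.1.1 0 = c := x.2
      rw [h0] at hs
      unfold Fin.tail
      omega⟩
  invFun y := ⟨⟨Fin.cons c y.1, by
    refine ⟨?_, ?_, ?_⟩
    · intro k hk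
      have : k = 0 := Fin.ext hk
      subst this
      simp
    · intro k l hkl
      induction l using Fin.cases with
      | zero => simp at hkl
      | succ l' =>
        induction k using Fin.cases with
        | zero =>
          have hl' : (l' : ℕ) = 0 := by simpa using hkl
          have := y.2.1 l' hl'
          simpa using this
        | succ k' =>
          simp only [Fin.val_succ] at hkl
          have := y.2.2.1 k' l' (by omega)
          simpa using this
    · rw [Fin.sum_univ_succ]
      simp only [Fin.cons_zero, Fin.cons_succ]
      rw [y.2.2.2]
      omega⟩, by simp⟩
  left_inv x := by
    apply Subtype.ext; apply Subtype.ext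
    have h0 : x.1.1 0 = c := x.2
    have h := Fin.cons_self_tail x.1.1
    rw [h0] at h
    simpa using h
  right_inv y := by
    apply Subtype.ext
    funext k
    simp [Fin.tail]

lemma emptyA (c n d : ℕ) (hcd : d < c) : IsEmpty {x : SeqSet c (n+1) d // x.1 0 = c} := by
  constructor
  rintro ⟨x, h0⟩
  have h1 : x.1 0 ≤ d :=
    calc x.1 0 ≤ ∑ i, x.1 i := Finset.single_le_sum (fun i _ => Nat.zero_le _) (Finset.mem_univ 0)
      _ = d := x.2.2.2
  omega

-- equiv for the case m 0 ≠ c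
def equivB (c n d : ℕ) (hnd : n + 1 ≤ d) :
    {x : SeqSet c (n+1) d // x.1 0 ≠ c} ≃ SeqSet c (n+1) (d - (n+1)) where
  toFun x := ⟨fun k => x.1.1 k - 1, by
    have hpos : ∀ k, 1 ≤ x.1.1 k := by
      apply seqSet_pos
      have := x.1.2.1 0 rfl
      have := x.2
      omega
    refine ⟨?_, ?_, ?_⟩
    · intro k hk
      have hk0 : k = 0 := Fin.ext hk
      subst hk0
      have h1 := x.1.2.1 0 rfl
      have h2 := x.2
      simp only []
      omega
    · intro k l hkl
      have h1 := x.1.2.2.1 k l hkl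
      have h2 := hpos k
      have h3 := hpos l
      simp only []
      omega
    · have : ∑ k, (x.1.1 k - 1 + 1) = ∑ k, x.1.1 k :=
        Finset.sum_congr rfl (fun k _ => Nat.sub_add_cancel (hpos k))
      rw [Finset.sum_add_distrib] at this
      simp only [Finset.sum_const, Finset.card_univ, Fintype.card_fin, smul_eq_mul, mul_one] at this
      have hs := x.1.2.2.2
      simp only []
      omega⟩
  invFun y := ⟨⟨fun k => y.1 k + 1, by
    refine ⟨?_, ?_, ?_⟩
    · intro k hk
      have := y.2.1 k hk
      simp only []
      omega
    · intro k l hkl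
      have := y.2.2.1 k l hkl
      simp only []
      omega
    · rw [Finset.sum_add_distrib]
      rw [y.2.2.2]
      simp only [Finset.sum_const, Finset.card_univ, Fintype.card_fin, smul_eq_mul, mul_one]
      omega⟩, by
    have := y.2.1 0 rfl
    simp only []
    omega⟩
  left_inv x := by
    apply Subtype.ext; apply Subtype.ext
    funext k
    have hpos : ∀ k, 1 ≤ x.1.1 k := by
      apply seqSet_pos
      have := x.1.2.1 0 rfl
      have := x.2
      omega
    have := hpos k
    simp only []
    omega
  right_inv y := by
    apply Subtype.ext
    funext k
    simp

lemma emptyB (c n d : ℕ) (hnd : d < n + 1) : IsEmpty {x : SeqSet c (n+1) d // x.1 0 ≠ c} := by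
  constructor
  rintro ⟨x, h0⟩
  have hpos : ∀ k, 1 ≤ x.1 k := by
    apply seqSet_pos
    have := x.2.1 0 rfl
    omega
  have : (n + 1 : ℕ) ≤ d := by
    calc (n+1 : ℕ) = ∑ _k : Fin (n+1), 1 := by simp
      _ ≤ ∑ k, x.1 k := Finset.sum_le_sum (fun k _ => hpos k)
      _ = d := x.2.2.2
  omega

lemma card_rec (c n d : ℕ) :
    Nat.card (SeqSet c (n+1) d) =
      (if c ≤ d then Nat.card (SeqSet (c+2) n (d - c)) else 0) +
      (if n + 1 ≤ d then Nat.card (SeqSet c (n+1) (d - (n+1))) else 0) := by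
  have hsplit : Nat.card (SeqSet c (n+1) d) =
      Nat.card {x : SeqSet c (n+1) d // x.1 0 = c} +
      Nat.card {x : SeqSet c (n+1) d // x.1 0 ≠ c} := by
    rw [← Nat.card_sum]
    exact Nat.card_congr (Equiv.sumCompl (fun x : SeqSet c (n+1) d => x.1 0 = c)).symm
  rw [hsplit]
  congr 1
  · split_ifs with h
    · exact Nat.card_congr (equivA c n d h)
    · haveI := emptyA c n d (by omega)
      exact Nat.card_of_isEmpty
  · split_ifs with h
    · exact Nat.card_congr (equivB c n d h)
    · haveI := emptyB c n d (by omega)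
      exact Nat.card_of_isEmpty


lemma seqGF_rec (c n : ℕ) :
    seqGF c (n+1) = X ^ c * seqGF (c+2) n + X ^ (n+1) * seqGF c (n+1) := by
  ext d
  rw [map_add, coeff_X_pow_mul', coeff_X_pow_mul', coeff_seqGF, coeff_seqGF, coeff_seqGF,
    card_rec]
  push_cast
  split_ifs <;> simp

lemma prod_seqGF (c n : ℕ) (hc : 1 ≤ c) :
    (∏ k ∈ Finset.range n, (1 - (X : PowerSeries ℚ) ^ (k+1))) * seqGF c n
      = X ^ (n^2 + (c-1)*n) := by
  induction n generalizing c with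
  | zero => simp [seqGF_zero]
  | succ n ih =>
    have h1 : (1 - (X : PowerSeries ℚ)^(n+1)) * seqGF c (n+1) = X^c * seqGF (c+2) n := by
      have h := seqGF_rec c n
      calc (1 - (X : PowerSeries ℚ)^(n+1)) * seqGF c (n+1)
          = seqGF c (n+1) - X^(n+1) * seqGF c (n+1) := by ring
        _ = X^c * seqGF (c+2) n := by nth_rewrite 1 [h]; ring
    rw [Finset.prod_range_succ]
    calc (∏ k ∈ Finset.range n, (1 - (X : PowerSeries ℚ)^(k+1))) * (1 - X^(n+1)) * seqGF c (n+1)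
        = (∏ k ∈ Finset.range n, (1 - (X : PowerSeries ℚ)^(k+1))) *
            ((1 - X^(n+1)) * seqGF c (n+1)) := by ring
      _ = X^c * ((∏ k ∈ Finset.range n, (1 - (X : PowerSeries ℚ)^(k+1))) * seqGF (c+2) n) := by
          rw [h1]; ring
      _ = X^c * X^(n^2 + (c+2-1)*n) := by rw [ih (c+2) (by omega)]
      _ = X^((n+1)^2 + (c-1)*(n+1)) := by
          rw [← pow_add]
          congr 1
          obtain ⟨c', rfl⟩ : ∃ c', c = c' + 1 := ⟨c - 1, by omega⟩
          simp only [Nat.add_sub_cancel]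
          have : c' + 1 + 2 - 1 = c' + 2 := by omega
          rw [this]
          ring

lemma constCoeff_prod (n : ℕ) :
    constantCoeff (∏ k ∈ Finset.range n, (1 - (X : PowerSeries ℚ) ^ (k+1))) = 1 := by
  rw [map_prod]
  apply Finset.prod_eq_one
  intro k _
  rw [map_sub, map_pow, map_one, constantCoeff_X]
  simp

lemma eq_X_pow_mul_inv (g f : PowerSeries ℚ) (e : ℕ) (h : g * f = X ^ e)
    (hg : constantCoeff g ≠ 0) : f = X ^ e * g⁻¹ := by
  have h2 := PowerSeries.inv_mul_cancel g hg
  calc f = (g⁻¹ * g) * f := by rw [h2, one_mul]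
    _ = g⁻¹ * (g * f) := by ring
    _ = X ^ e * g⁻¹ := by rw [h]; ring

lemma seqGF_closed (c n : ℕ) (hc : 1 ≤ c) :
    seqGF c n = (X : PowerSeries ℚ) ^ (n^2 + (c-1)*n) *
      (∏ k ∈ Finset.range n, (1 - (X : PowerSeries ℚ) ^ (k+1)))⁻¹ :=
  eq_X_pow_mul_inv _ _ _ (prod_seqGF c n hc) (by rw [constCoeff_prod]; norm_num)

theorem seqGF_eq_and_prod (ℓ r : ℕ) (hr : r ≤ ℓ) (n : Fin ℓ → ℕ)
    (c : Fin ℓ → ℕ)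
    (hc : ∀ j : Fin ℓ, c j = 1 + (∑ i ∈ Finset.univ.filter (· < j), n i) +
      (if (j : ℕ) + 1 ≤ r then 1 else 0)) :
    (∀ j : Fin ℓ,
      seqGF (c j) (n j) =
        (X : PowerSeries ℚ) ^ (n j ^ 2 + (c j - 1) * n j) *
          (∏ k ∈ Finset.range (n j), (1 - (X : PowerSeries ℚ) ^ (k + 1)))⁻¹) ∧
    (∏ j, seqGF (c j) (n j)) =
      (X : PowerSeries ℚ) ^
          ((∑ i, n i ^ 2) +
           (∑ j, ∑ i ∈ Finset.univ.filter (· < j), n i * n j) +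
           (∑ i ∈ Finset.univ.filter (fun i : Fin ℓ => (i : ℕ) + 1 ≤ r), n i)) *
        (∏ j, ∏ k ∈ Finset.range (n j), (1 - (X : PowerSeries ℚ) ^ (k + 1)))⁻¹ := by
  have hc1 : ∀ j, 1 ≤ c j := by
    intro j
    rw [hc j]
    omega
  constructor
  · intro j
    exact seqGF_closed (c j) (n j) (hc1 j)
  · have hsum : ∑ j, (n j ^ 2 + (c j - 1) * n j) =
        (∑ i, n i ^ 2) +
        (∑ j, ∑ i ∈ Finset.univ.filter (· < j), n i * n j) +
        (∑ i ∈ Finset.univ.filter (fun i : Fin ℓ => (i : ℕ) + 1 ≤ r), n i) := by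
      rw [Finset.sum_add_distrib]
      have step : ∀ j : Fin ℓ, (c j - 1) * n j =
          (∑ i ∈ Finset.univ.filter (· < j), n i * n j) +
          (if (j : ℕ) + 1 ≤ r then n j else 0) := by
        intro j
        have h1 : c j - 1 = (∑ i ∈ Finset.univ.filter (· < j), n i) +
            (if (j : ℕ) + 1 ≤ r then 1 else 0) := by
          rw [hc j]; omega
        rw [h1, add_mul, Finset.sum_mul, ite_mul, one_mul, zero_mul]
      rw [Finset.sum_congr rfl (fun j _ => step j), Finset.sum_add_distrib,
        ← Finset.sum_filter, ← add_assoc]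
    have hprod : (∏ j, ∏ k ∈ Finset.range (n j), (1 - (X : PowerSeries ℚ) ^ (k + 1))) *
        (∏ j, seqGF (c j) (n j)) =
        (X : PowerSeries ℚ) ^
          ((∑ i, n i ^ 2) +
           (∑ j, ∑ i ∈ Finset.univ.filter (· < j), n i * n j) +
           (∑ i ∈ Finset.univ.filter (fun i : Fin ℓ => (i : ℕ) + 1 ≤ r), n i)) := by
      rw [← Finset.prod_mul_distrib, ← hsum, ← Finset.prod_pow_eq_pow_sum]
      exact Finset.prod_congr rfl (fun j _ => prod_seqGF (c j) (n j) (hc1 j))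
    refine eq_X_pow_mul_inv _ _ _ hprod ?_
    rw [map_prod]
    rw [Finset.prod_congr rfl (fun j _ => constCoeff_prod (n j))]
    simp
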